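/- A morphism f : X → Y of S-schemes is quasi-compact (respectively quasi-separated) as a morphism of schemes if and only if the induced morphism between the functors represented by X and Y is quasi-compact (respectively quasi-separated) in the functor sense. -/

import Mathlib

open CategoryTheory CategoryTheory.Limits AlgebraicGeometry Opposite

universe u

/-- The category of contravariant set-valued functors on `S`-schemes. -/
abbrev SFunctor (S : Scheme.{u}) := (Over S)ᵒᵖ ⥤ Type u

/-- A field extension of a field `K` : a field `L` together with a ring
homomorphism (necessarily injective) `K →+* L`. -/
structure FieldExt (K : Type u) [Field K] : Type (u + 1) where
  carrier : Type u
  [fieldInst : Field carrier]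
  emb : K →+* carrier

attribute [instance] FieldExt.fieldInst

variable {S : Scheme.{u}}

/-- A morphism of functors `u : F ⟶ G` is surjective if for every field `K`,
every morphism `Spec K → S` and every `ξ ∈ G(Spec K)`, there is a field
extension `L` of `K` such that the restriction of `ξ` to `G(Spec L)` lies in
the image of `F(Spec L) → G(Spec L)`. -/
def IsSurjectiveMor {F G : SFunctor S} (u : F ⟶ G) : Prop :=
  ∀ (K : Type u) [Field K] (s : Spec (CommRingCat.of K) ⟶ S)
    (ξ : G.obj (op (Over.mk s))),
    ∃ (L : FieldExt K)
      (η : F.obj (op (Over.mk (Spec.map (CommRingCat.ofHom L.emb) ≫ s)))),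
      u.app _ η =
        G.map ((Over.homMk (Spec.map (CommRingCat.ofHom L.emb)) rfl :
          Over.mk (Spec.map (CommRingCat.ofHom L.emb) ≫ s) ⟶ Over.mk s)).op ξ

/-- A functor on `S`-schemes is quasi-compact if it admits a surjective
morphism from (the functor represented by) a quasi-compact `S`-scheme. -/
def QCFunctor (F : SFunctor S) : Prop :=
  ∃ (T : Over S) (u : yoneda.obj T ⟶ F), CompactSpace T.left ∧ IsSurjectiveMor u

/-- A morphism of functors `F ⟶ G` is quasi-compact if for every quasi-compact
`S`-scheme `T` and every morphism `T → G`, the fiber product `F ×_G T` is a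
quasi-compact functor. -/
def QCMor {F G : SFunctor S} (u : F ⟶ G) : Prop :=
  ∀ (T : Over S), CompactSpace T.left →
    ∀ v : yoneda.obj T ⟶ G, QCFunctor (pullback u v)

/-- A morphism of functors `F ⟶ G` is quasi-separated if its diagonal
`F ⟶ F ×_G F` is quasi-compact. -/
def QSMor {F G : SFunctor S} (u : F ⟶ G) : Prop :=
  QCMor (pullback.diagonal u)

-- AUX

lemma isSurjectiveMor_of_isIso {F G : SFunctor S} (u : F ⟶ G) [IsIso u] :
    IsSurjectiveMor u := by
  intro K _ s ξ
  refine ⟨⟨K, RingHom.id K⟩, (inv u).app _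
    (G.map ((Over.homMk (Spec.map (CommRingCat.ofHom (RingHom.id K))) rfl :
      Over.mk (Spec.map (CommRingCat.ofHom (RingHom.id K)) ≫ s) ⟶ Over.mk s)).op ξ), ?_⟩
  have := ConcreteCategory.congr_hom (IsIso.inv_hom_id
    (u.app (op (Over.mk (Spec.map (CommRingCat.ofHom (RingHom.id K)) ≫ s)))))
    (G.map ((Over.homMk (Spec.map (CommRingCat.ofHom (RingHom.id K))) rfl :
      Over.mk (Spec.map (CommRingCat.ofHom (RingHom.id K)) ≫ s) ⟶ Over.mk s)).op ξ)
  simpa using this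

lemma IsSurjectiveMor.comp_iso {F G G' : SFunctor S} {u : F ⟶ G} (hu : IsSurjectiveMor u)
    (e : G ≅ G') : IsSurjectiveMor (u ≫ e.hom) := by
  intro K _ s ξ
  obtain ⟨L, η, hη⟩ := hu K s (e.inv.app _ ξ)
  refine ⟨L, η, ?_⟩
  have h2 := congrArg (e.hom.app (op (Over.mk (Spec.map (CommRingCat.ofHom L.emb) ≫ s)))) hη
  simp only [NatTrans.comp_app, types_comp_apply]
  rw [h2, ← FunctorToTypes.naturality]
  simp

lemma QCFunctor.of_iso {F G : SFunctor S} (e : F ≅ G) (h : QCFunctor F) : QCFunctor G := by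
  obtain ⟨T, w, hT, hw⟩ := h
  exact ⟨T, w ≫ e.hom, hT, hw.comp_iso e⟩

lemma QCMor.comp_iso {F G G' : SFunctor S} {u : F ⟶ G} (hu : QCMor u) (e : G ≅ G') :
    QCMor (u ≫ e.hom) := by
  intro T hT v
  refine QCFunctor.of_iso (asIso (pullback.map u (v ≫ e.inv) (u ≫ e.hom) v
    (𝟙 _) (𝟙 _) e.hom (by simp) (by simp))) (hu T hT (v ≫ e.inv))

lemma qcMor_comp_iso_iff {F G G' : SFunctor S} (u : F ⟶ G) (e : G ≅ G') :
    QCMor u ↔ QCMor (u ≫ e.hom) :=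
  ⟨fun h => h.comp_iso e, fun h => by simpa using h.comp_iso e.symm⟩

lemma map_diagonal_eq {C : Type*} {D : Type*} [Category C] [Category D] (G : C ⥤ D) {X Y : C}
    (f : X ⟶ Y) [HasPullback f f] [HasPullback (G.map f) (G.map f)]
    [PreservesLimit (cospan f f) G] :
    G.map (pullback.diagonal f) ≫ (PreservesPullback.iso G f f).hom
      = pullback.diagonal (G.map f) := by
  apply pullback.hom_ext <;>
  simp [PreservesPullback.iso_hom_fst, PreservesPullback.iso_hom_snd, ← G.map_comp]

noncomputable def compactSpaceOfIso {P Q : Scheme.{u}} (e : P ≅ Q) [CompactSpace P] :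
    CompactSpace Q :=
  (TopCat.homeoOfIso (Scheme.forgetToTop.mapIso e)).compactSpace

lemma qcFunctor_yoneda_iff (Z : Over S) : QCFunctor (yoneda.obj Z) ↔ CompactSpace Z.left := by
  constructor
  · rintro ⟨T, w, hT, hw⟩
    obtain ⟨g, rfl⟩ : ∃ g : T ⟶ Z, yoneda.map g = w := ⟨yoneda.preimage w, by simp⟩
    have hsurj : Function.Surjective g.left.base := by
      intro z
      obtain ⟨L, η, hη⟩ := hw ↑(Z.left.residueField z) (Z.left.fromSpecResidueField z ≫ Z.hom)
        (Over.homMk (Z.left.fromSpecResidueField z) rfl)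
      have h2 : η.left ≫ g.left =
          Spec.map (CommRingCat.ofHom L.emb) ≫ Z.left.fromSpecResidueField z := by
        have := congrArg CommaMorphism.left hη
        simpa using this
      let pt : PrimeSpectrum L.carrier := ⟨⊥, Ideal.bot_prime⟩
      refine ⟨η.left.base pt, ?_⟩
      have h3 := congrArg (fun q : _ ⟶ Z.left => q.base pt) h2
      refine h3.trans ?_
      exact Z.left.fromSpecResidueField_apply z _
    constructor
    have : (Set.univ : Set Z.left) = g.left.base '' Set.univ := by
      ext z
      simpa using hsurj z
    rw [this]
    exact (hT.isCompact_univ).image g.left.continuous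
  · intro h
    exact ⟨Z, 𝟙 _, h, isSurjectiveMor_of_isIso _⟩

lemma qc_iff_qcmor {A B : Over S} (h : A ⟶ B) :
    QuasiCompact h.left ↔ QCMor (yoneda.map h) := by
  constructor
  · intro hqc T hT v
    obtain ⟨g, rfl⟩ : ∃ g : T ⟶ B, yoneda.map g = v := ⟨yoneda.preimage v, by simp⟩
    refine QCFunctor.of_iso (PreservesPullback.iso yoneda h g) ?_
    rw [qcFunctor_yoneda_iff]
    have hsnd : QuasiCompact (pullback.snd h.left g.left) :=
      inferInstance
    have : CompactSpace (pullback h.left g.left : Scheme.{u}) := by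
      rw [← isCompact_univ_iff]
      have := hsnd.isCompact_preimage Set.univ isOpen_univ hT.isCompact_univ
      simpa using this
    exact @compactSpaceOfIso _ _ (PreservesPullback.iso (Over.forget S) h g).symm this
  · intro hq
    rw [quasiCompact_iff_forall_isAffineOpen]
    intro U hU
    have hT : CompactSpace (Over.mk (U.ι ≫ B.hom) : Over S).left := by
      have : IsAffine (U : Scheme.{u}) := hU
      show CompactSpace (U : Scheme.{u})
      infer_instance
    have := hq (Over.mk (U.ι ≫ B.hom)) hT (yoneda.map (Over.homMk U.ι rfl))
    have hc : CompactSpace (pullback h.left U.ι : Scheme.{u}) := by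
      rw [← qcFunctor_yoneda_iff] at *
      have := QCFunctor.of_iso (PreservesPullback.iso yoneda h
        (Over.homMk U.ι rfl : Over.mk (U.ι ≫ B.hom) ⟶ B)).symm this
      rw [qcFunctor_yoneda_iff] at this
      exact @compactSpaceOfIso _ _ (PreservesPullback.iso (Over.forget S) h
        (Over.homMk U.ι rfl : Over.mk (U.ι ≫ B.hom) ⟶ B)) this
    have := @compactSpaceOfIso _ _ (pullbackRestrictIsoRestrict h.left U) hc
    rw [isCompact_iff_compactSpace]
    exact this


/-- A morphism `f : X ⟶ Y` of `S`-schemes is quasi-compact (resp.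
quasi-separated) as a morphism of schemes iff the induced morphism of
represented functors is quasi-compact (resp. quasi-separated). -/
theorem quasiCompact_quasiSeparated_iff_functor {S : Scheme.{u}} {X Y : Over S} (f : X ⟶ Y) :
    (QuasiCompact f.left ↔ QCMor (yoneda.map f)) ∧
    (QuasiSeparated f.left ↔ QSMor (yoneda.map f)) := by
  refine ⟨qc_iff_qcmor f, ?_⟩
  have h1 : (pullback.diagonal f).left ≫ (PreservesPullback.iso (Over.forget S) f f).hom
      = pullback.diagonal f.left := map_diagonal_eq (Over.forget S) f
  have h2 := map_diagonal_eq yoneda f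
  have key : QuasiCompact (pullback.diagonal f.left)
      ↔ QCMor (pullback.diagonal (yoneda.map f)) := by
    haveI : MorphismProperty.RespectsIso @QuasiCompact :=
      MorphismProperty.respectsIso_of_isStableUnderComposition
        (fun _ _ f (_ : IsIso f) => inferInstance)
    rw [← h1]
    refine (@MorphismProperty.cancel_right_of_respectsIso _ _ @QuasiCompact _ _ _ _ _
      (PreservesPullback.iso (Over.forget S) f f).hom (Iso.isIso_hom _)).trans ?_
    refine (qc_iff_qcmor (pullback.diagonal f)).trans ?_
    rw [qcMor_comp_iso_iff _ (PreservesPullback.iso yoneda f f), h2]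
  exact ⟨fun h => key.mp h.quasiCompact_diagonal, fun h => ⟨key.mpr h⟩⟩
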